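/- Sharp Zygmund inequality on the square torus: let λ > 0 and let (a_m)_{m ∈ S_λ} be complex numbers, where S_λ := {m ∈ ℤ² : |m|² = λ}. Set u(x) := Σ_{m ∈ S_λ} a_m e^{2πi m·x}. Then ∫_{[0,1]²} |u(x)|⁴ dx ≤ 3 ( Σ_{m ∈ S_λ} |a_m|² )². -/

import Mathlib

open MeasureTheory Real

noncomputable section

namespace Zyg

def E (k : ℤ × ℤ) (x : ℝ × ℝ) : ℂ :=
  Complex.exp (2 * (Real.pi : ℂ) * Complex.I * ((k.1 : ℂ) * (x.1 : ℂ) + (k.2 : ℂ) * (x.2 : ℂ)))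

lemma E_continuous (k : ℤ × ℤ) : Continuous (E k) := by
  unfold E; fun_prop

lemma E_mul (k l : ℤ × ℤ) (x : ℝ × ℝ) : E k x * E l x = E (k + l) x := by
  rw [E, E, E, ← Complex.exp_add]; congr 1
  simp only [Prod.fst_add, Prod.snd_add]; push_cast; ring

lemma E_conj (k : ℤ × ℤ) (x : ℝ × ℝ) : (starRingEnd ℂ) (E k x) = E (-k) x := by
  rw [E, E, ← Complex.exp_conj]; congr 1
  simp only [map_mul, map_add, map_ofNat, Complex.conj_I, Complex.conj_ofReal, map_intCast,
    Prod.fst_neg, Prod.snd_neg]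
  push_cast; ring

lemma exp_int_integral (k : ℤ) :
    (∫ t in Set.Icc (0:ℝ) 1, Complex.exp (2 * (Real.pi:ℂ) * Complex.I * (k:ℂ) * t)) =
      if k = 0 then 1 else 0 := by
  rw [MeasureTheory.integral_Icc_eq_integral_Ioc,
    ← intervalIntegral.integral_of_le (by norm_num : (0:ℝ) ≤ 1)]
  by_cases hk : k = 0
  · simp [hk]
  · rw [integral_exp_mul_complex (by simp [Real.pi_ne_zero, Complex.I_ne_zero, hk])]
    simp only [Complex.ofReal_one, Complex.ofReal_zero]
    rw [show 2 * (Real.pi:ℂ) * Complex.I * (k:ℂ) * 1 =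
        (k:ℤ) * (2 * Real.pi * Complex.I) by push_cast; ring,
      Complex.exp_int_mul_two_pi_mul_I]
    simp [hk]

lemma E_integral (k : ℤ × ℤ) :
    (∫ x in Set.Icc (0:ℝ) 1 ×ˢ Set.Icc (0:ℝ) 1, E k x) = if k = 0 then 1 else 0 := by
  have hsplit : ∀ x : ℝ × ℝ, E k x =
      Complex.exp (2 * (Real.pi:ℂ) * Complex.I * (k.1:ℂ) * x.1) *
      Complex.exp (2 * (Real.pi:ℂ) * Complex.I * (k.2:ℂ) * x.2) := by
    intro x; rw [E, ← Complex.exp_add]; congr 1; ring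
  have hint : IntegrableOn (E k) (Set.Icc (0:ℝ) 1 ×ˢ Set.Icc (0:ℝ) 1) volume :=
    (E_continuous k).continuousOn.integrableOn_compact (isCompact_Icc.prod isCompact_Icc)
  rw [MeasureTheory.Measure.volume_eq_prod] at hint ⊢
  rw [MeasureTheory.setIntegral_prod _ hint]
  simp only [hsplit]
  rw [show (∫ x in Set.Icc (0:ℝ) 1, ∫ y in Set.Icc (0:ℝ) 1,
      Complex.exp (2 * (Real.pi:ℂ) * Complex.I * (k.1:ℂ) * x) *
      Complex.exp (2 * (Real.pi:ℂ) * Complex.I * (k.2:ℂ) * y)) =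
      (∫ x in Set.Icc (0:ℝ) 1, Complex.exp (2 * (Real.pi:ℂ) * Complex.I * (k.1:ℂ) * x)) *
      (∫ y in Set.Icc (0:ℝ) 1, Complex.exp (2 * (Real.pi:ℂ) * Complex.I * (k.2:ℂ) * y)) by
    rw [← MeasureTheory.integral_mul_const]
    exact MeasureTheory.setIntegral_congr_fun measurableSet_Icc fun x _ => by
      rw [MeasureTheory.integral_const_mul]]
  rw [exp_int_integral, exp_int_integral]
  rcases k with ⟨k1, k2⟩
  by_cases h1 : k1 = 0 <;> by_cases h2 : k2 = 0 <;> simp [h1, h2, Prod.ext_iff]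

lemma mul_conj_norm (z : ℂ) : z * (starRingEnd ℂ) z = ((‖z‖ ^ 2 : ℝ) : ℂ) := by
  rw [Complex.mul_conj]; congr 1
  rw [Complex.normSq_eq_norm_sq]

lemma re_nonneg_pair (w z : ℂ) : 0 ≤ (w * z * (starRingEnd ℂ) w * (starRingEnd ℂ) z).re := by
  have h : w * z * (starRingEnd ℂ) w * (starRingEnd ℂ) z =
      ((‖w‖ ^ 2 * ‖z‖ ^ 2 : ℝ) : ℂ) := by
    rw [show w * z * (starRingEnd ℂ) w * (starRingEnd ℂ) z =
      (w * (starRingEnd ℂ) w) * (z * (starRingEnd ℂ) z) by ring, mul_conj_norm, mul_conj_norm]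
    push_cast; ring
  rw [h, Complex.ofReal_re]; positivity

lemma vec_lemma {d1 d2 e1 e2 : ℤ} (Fed : e1 * d1 + e2 * d2 = d1 ^ 2 + d2 ^ 2)
    (cross : d1 * e2 - d2 * e1 = 0) (hd : ¬(d1 = 0 ∧ d2 = 0)) : d1 = e1 ∧ d2 = e2 := by
  have hdpos : 0 < d1 ^ 2 + d2 ^ 2 := by
    rcases (by tauto : d1 ≠ 0 ∨ d2 ≠ 0) with h | h <;> positivity
  have lag : (e1 * d1 + e2 * d2) ^ 2 + (d1 * e2 - d2 * e1) ^ 2 =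
      (d1 ^ 2 + d2 ^ 2) * (e1 ^ 2 + e2 ^ 2) := by ring
  rw [Fed, cross] at lag
  have hnorm : d1 ^ 2 + d2 ^ 2 = e1 ^ 2 + e2 ^ 2 :=
    mul_left_cancel₀ (ne_of_gt hdpos) (by linarith [lag])
  have hzero : (d1 - e1) ^ 2 + (d2 - e2) ^ 2 = 0 := by
    have h : (d1 - e1) ^ 2 + (d2 - e2) ^ 2 =
        (d1 ^ 2 + d2 ^ 2) - 2 * (e1 * d1 + e2 * d2) + (e1 ^ 2 + e2 ^ 2) := by ring
    rw [h, Fed, ← hnorm]; ring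
  constructor <;> nlinarith [sq_nonneg (d1 - e1), sq_nonneg (d2 - e2)]

lemma circle_quad {m n p q : ℤ × ℤ}
    (h1 : m.1 ^ 2 + m.2 ^ 2 = n.1 ^ 2 + n.2 ^ 2)
    (h2 : m.1 ^ 2 + m.2 ^ 2 = p.1 ^ 2 + p.2 ^ 2)
    (h3 : m.1 ^ 2 + m.2 ^ 2 = q.1 ^ 2 + q.2 ^ 2)
    (hsum : m + n = p + q) :
    (p = m ∧ q = n) ∨ (p = n ∧ q = m) ∨ (n = -m ∧ q = -p) := by
  obtain ⟨m1, m2⟩ := m; obtain ⟨n1, n2⟩ := n; obtain ⟨p1, p2⟩ := p; obtain ⟨q1, q2⟩ := q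
  simp only [Prod.mk_add_mk, Prod.mk.injEq, Prod.neg_mk] at *
  obtain ⟨hs1, hs2⟩ := hsum
  by_cases hz : m1 + n1 = 0 ∧ m2 + n2 = 0
  · exact Or.inr (Or.inr ⟨⟨by omega, by omega⟩, by omega, by omega⟩)
  have hq1 : q1 = m1 + n1 - p1 := by omega
  have hq2 : q2 = m2 + n2 - p2 := by omega
  subst hq1 hq2
  have Fds2 : 2 * ((m1 - p1) * (m1 + n1) + (m2 - p2) * (m2 + n2)) = 0 := by
    linear_combination h1 + h2 - h3
  have Fds : (m1 - p1) * (m1 + n1) + (m2 - p2) * (m2 + n2) = 0 := by linarith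
  have Fes : (m1 - n1) * (m1 + n1) + (m2 - n2) * (m2 + n2) = 0 := by linear_combination h1
  have Fed : (m1 - n1) * (m1 - p1) + (m2 - n2) * (m2 - p2) =
      (m1 - p1) ^ 2 + (m2 - p2) ^ 2 := by linear_combination h2 - Fds
  have cross : (m1 - p1) * (m2 - n2) - (m2 - p2) * (m1 - n1) = 0 := by
    rcases (by omega : m1 + n1 ≠ 0 ∨ m2 + n2 ≠ 0) with hs | hs
    · have h : ((m1 - p1) * (m2 - n2) - (m2 - p2) * (m1 - n1)) * (m1 + n1) = 0 := by
        linear_combination (m2 - n2) * Fds - (m2 - p2) * Fes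
      rcases mul_eq_zero.1 h with h | h
      · exact h
      · exact absurd h hs
    · have h : ((m1 - p1) * (m2 - n2) - (m2 - p2) * (m1 - n1)) * (m2 + n2) = 0 := by
        linear_combination (m1 - p1) * Fes - (m1 - n1) * Fds
      rcases mul_eq_zero.1 h with h | h
      · exact h
      · exact absurd h hs
  by_cases hd : m1 - p1 = 0 ∧ m2 - p2 = 0
  · exact Or.inl ⟨⟨by omega, by omega⟩, by omega, by omega⟩
  · have := vec_lemma (d1 := m1 - p1) (d2 := m2 - p2) (e1 := m1 - n1) (e2 := m2 - n2)
      (by linear_combination Fed) (by linear_combination cross) (by omega)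
    exact Or.inr (Or.inl ⟨⟨by omega, by omega⟩, by omega, by omega⟩)

lemma sum_ite_const {α β : Type*} [AddCommMonoid β] (s : Finset α) (P : Prop) [Decidable P]
    (g : α → β) : (∑ x ∈ s, if P then g x else 0) = if P then ∑ x ∈ s, g x else 0 := by
  split_ifs <;> simp

end Zyg

open Zyg in
/-- Sharp Zygmund inequality on the square torus: for a trigonometric polynomial whose
frequencies all lie on the circle `{m ∈ ℤ² : |m|² = λ}`, the `L⁴([0,1]²)` norm is
controlled by the `L²` norm with constant `3`. -/
theorem zygmund_inequality_square_torus
    (lam : ℝ) (hlam : 0 < lam) (S : Finset (ℤ × ℤ))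
    (hS : ∀ m : ℤ × ℤ, m ∈ S ↔ ((m.1 : ℝ) ^ 2 + (m.2 : ℝ) ^ 2 = lam))
    (a : ℤ × ℤ → ℂ) :
    (∫ x in Set.Icc (0 : ℝ) 1 ×ˢ Set.Icc (0 : ℝ) 1,
        ‖∑ m ∈ S, a m *
          Complex.exp (2 * (Real.pi : ℂ) * Complex.I *
            ((m.1 : ℂ) * (x.1 : ℂ) + (m.2 : ℂ) * (x.2 : ℂ)))‖ ^ 4) ≤
      3 * (∑ m ∈ S, ‖a m‖ ^ 2) ^ 2 := by
  have hIF :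
      (∫ x in Set.Icc (0 : ℝ) 1 ×ˢ Set.Icc (0 : ℝ) 1,
        ‖∑ m ∈ S, a m *
          Complex.exp (2 * (Real.pi : ℂ) * Complex.I *
            ((m.1 : ℂ) * (x.1 : ℂ) + (m.2 : ℂ) * (x.2 : ℂ)))‖ ^ 4) =
      (∑ z ∈ S ×ˢ S ×ˢ S ×ˢ S,
        (a z.1 * a z.2.1 * (starRingEnd ℂ) (a z.2.2.1) * (starRingEnd ℂ) (a z.2.2.2)) *
          (if z.1 + z.2.1 - z.2.2.1 - z.2.2.2 = 0 then 1 else 0)).re := by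
    show (∫ x in Set.Icc (0 : ℝ) 1 ×ˢ Set.Icc (0 : ℝ) 1, ‖∑ m ∈ S, a m * E m x‖ ^ 4) = _
    set D := Set.Icc (0 : ℝ) 1 ×ˢ Set.Icc (0 : ℝ) 1 with hD
    have hDc : IsCompact D := isCompact_Icc.prod isCompact_Icc
    have hDm : MeasurableSet D := measurableSet_Icc.prod measurableSet_Icc
    set u : ℝ × ℝ → ℂ := fun x => ∑ m ∈ S, a m * E m x with hu
    have hu_cont : Continuous u := by
      apply continuous_finset_sum; exact fun m _ => continuous_const.mul (E_continuous m)
    have hF_cont : Continuous fun x =>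
        u x * u x * (starRingEnd ℂ) (u x) * (starRingEnd ℂ) (u x) :=
      ((hu_cont.mul hu_cont).mul hu_cont.star).mul hu_cont.star
    have habs : ∀ x, ‖u x‖ ^ 4 =
        (u x * u x * (starRingEnd ℂ) (u x) * (starRingEnd ℂ) (u x)).re := by
      intro x
      have h : u x * u x * (starRingEnd ℂ) (u x) * (starRingEnd ℂ) (u x) =
          ((‖u x‖ ^ 2 * ‖u x‖ ^ 2 : ℝ) : ℂ) := by
        rw [show u x * u x * (starRingEnd ℂ) (u x) * (starRingEnd ℂ) (u x) =
          (u x * (starRingEnd ℂ) (u x)) * (u x * (starRingEnd ℂ) (u x)) by ring,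
          mul_conj_norm]
        push_cast; ring
      rw [h, Complex.ofReal_re]; ring
    have hFint : IntegrableOn
        (fun x => u x * u x * (starRingEnd ℂ) (u x) * (starRingEnd ℂ) (u x)) D volume :=
      hF_cont.continuousOn.integrableOn_compact hDc
    rw [MeasureTheory.setIntegral_congr_fun hDm fun x _ => habs x]
    rw [show (∫ x in D, (u x * u x * (starRingEnd ℂ) (u x) * (starRingEnd ℂ) (u x)).re) =
        (∫ x in D, u x * u x * (starRingEnd ℂ) (u x) * (starRingEnd ℂ) (u x)).re from by
      simpa using integral_re (μ := volume.restrict D) hFint]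
    congr 1
    have hFeq : ∀ x, u x * u x * (starRingEnd ℂ) (u x) * (starRingEnd ℂ) (u x) =
        ∑ z ∈ S ×ˢ S ×ˢ S ×ˢ S,
          (a z.1 * a z.2.1 * (starRingEnd ℂ) (a z.2.2.1) * (starRingEnd ℂ) (a z.2.2.2)) *
            E (z.1 + z.2.1 - z.2.2.1 - z.2.2.2) x := by
      intro x
      have hconj : (starRingEnd ℂ) (u x) = ∑ p ∈ S, (starRingEnd ℂ) (a p) * E (-p) x := by
        rw [hu]; rw [map_sum]
        exact Finset.sum_congr rfl fun p _ => by rw [map_mul, E_conj]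
      rw [hconj, hu]
      rw [show (∑ z ∈ S ×ˢ S ×ˢ S ×ˢ S,
          (a z.1 * a z.2.1 * (starRingEnd ℂ) (a z.2.2.1) * (starRingEnd ℂ) (a z.2.2.2)) *
            E (z.1 + z.2.1 - z.2.2.1 - z.2.2.2) x) =
          ∑ z ∈ S ×ˢ S ×ˢ S ×ˢ S,
          (a z.2.2.2 * a z.2.2.1 * (starRingEnd ℂ) (a z.2.1) * (starRingEnd ℂ) (a z.1)) *
            E (z.2.2.2 + z.2.2.1 - z.2.1 - z.1) x from
        Finset.sum_nbij' (fun z => (z.2.2.2, z.2.2.1, z.2.1, z.1))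
          (fun z => (z.2.2.2, z.2.2.1, z.2.1, z.1))
          (fun z hz => by simp only [Finset.mem_product] at hz ⊢; tauto)
          (fun z hz => by simp only [Finset.mem_product] at hz ⊢; tauto)
          (fun z _ => rfl) (fun z _ => rfl) (fun z _ => rfl)]
      rw [show (∑ m ∈ S, a m * E m x) * (∑ m ∈ S, a m * E m x) *
          (∑ p ∈ S, (starRingEnd ℂ) (a p) * E (-p) x) *
          (∑ p ∈ S, (starRingEnd ℂ) (a p) * E (-p) x) =
          (∑ m ∈ S, a m * E m x) * ((∑ m ∈ S, a m * E m x) *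
          ((∑ p ∈ S, (starRingEnd ℂ) (a p) * E (-p) x) *
          (∑ p ∈ S, (starRingEnd ℂ) (a p) * E (-p) x))) by ring]
      simp only [Finset.sum_product, Finset.sum_mul, Finset.mul_sum]
      refine Finset.sum_congr rfl fun m _ => Finset.sum_congr rfl fun n _ =>
        Finset.sum_congr rfl fun p _ => Finset.sum_congr rfl fun q _ => ?_
      rw [show q + p - n - m = q + (p + (-n + -m)) by abel, ← E_mul, ← E_mul, ← E_mul]
      ring
    rw [show (fun x => u x * u x * (starRingEnd ℂ) (u x) * (starRingEnd ℂ) (u x)) =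
        fun x => ∑ z ∈ S ×ˢ S ×ˢ S ×ˢ S,
          (a z.1 * a z.2.1 * (starRingEnd ℂ) (a z.2.2.1) * (starRingEnd ℂ) (a z.2.2.2)) *
            E (z.1 + z.2.1 - z.2.2.1 - z.2.2.2) x from funext hFeq]
    rw [MeasureTheory.integral_finset_sum _ (fun z _ =>
      (continuous_const.fun_mul (E_continuous _)).continuousOn.integrableOn_compact hDc)]
    exact Finset.sum_congr rfl fun z _ => by
      rw [MeasureTheory.integral_const_mul, hD, E_integral]
  rw [hIF]
  set Q := ∑ m ∈ S, ‖a m‖ ^ 2 with hQ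
  have h0S : (0 : ℤ × ℤ) ∉ S := by
    intro h
    have h' := (hS 0).1 h
    norm_num at h'
    linarith
  have hneg : ∀ m ∈ S, -m ∈ S := by
    intro m hm
    rw [hS] at hm ⊢
    simpa [Prod.fst_neg, Prod.snd_neg] using hm
  have hnorms : ∀ m ∈ S, ∀ n ∈ S, m.1 ^ 2 + m.2 ^ 2 = n.1 ^ 2 + n.2 ^ 2 := by
    intro m hm n hn
    have h1 := (hS m).1 hm
    have h2 := (hS n).1 hn
    exact_mod_cast h1.trans h2.symm
  simp only [mul_ite, mul_one, mul_zero]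
  -- pointwise inclusion-exclusion identity
  have hident : ∀ z ∈ S ×ˢ S ×ˢ S ×ˢ S,
      ((if z.1 + z.2.1 - z.2.2.1 - z.2.2.2 = 0 then
          a z.1 * a z.2.1 * (starRingEnd ℂ) (a z.2.2.1) * (starRingEnd ℂ) (a z.2.2.2) else 0)
        + (if (z.2.2.1 = z.1 ∧ z.2.2.2 = z.2.1) ∧ (z.2.2.1 = z.2.1 ∧ z.2.2.2 = z.1) then
          a z.1 * a z.2.1 * (starRingEnd ℂ) (a z.2.2.1) * (starRingEnd ℂ) (a z.2.2.2) else 0)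
        + (if (z.2.2.1 = z.1 ∧ z.2.2.2 = z.2.1) ∧ (z.2.1 = -z.1 ∧ z.2.2.2 = -z.2.2.1) then
          a z.1 * a z.2.1 * (starRingEnd ℂ) (a z.2.2.1) * (starRingEnd ℂ) (a z.2.2.2) else 0)
        + (if (z.2.2.1 = z.2.1 ∧ z.2.2.2 = z.1) ∧ (z.2.1 = -z.1 ∧ z.2.2.2 = -z.2.2.1) then
          a z.1 * a z.2.1 * (starRingEnd ℂ) (a z.2.2.1) * (starRingEnd ℂ) (a z.2.2.2) else 0))
      = ((if z.2.2.1 = z.1 ∧ z.2.2.2 = z.2.1 then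
          a z.1 * a z.2.1 * (starRingEnd ℂ) (a z.2.2.1) * (starRingEnd ℂ) (a z.2.2.2) else 0)
        + (if z.2.2.1 = z.2.1 ∧ z.2.2.2 = z.1 then
          a z.1 * a z.2.1 * (starRingEnd ℂ) (a z.2.2.1) * (starRingEnd ℂ) (a z.2.2.2) else 0)
        + (if z.2.1 = -z.1 ∧ z.2.2.2 = -z.2.2.1 then
          a z.1 * a z.2.1 * (starRingEnd ℂ) (a z.2.2.1) * (starRingEnd ℂ) (a z.2.2.2) else 0)) := by
    rintro ⟨m, n, p, q⟩ hz
    dsimp only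
    simp only [Finset.mem_product] at hz
    obtain ⟨hm, hn, hp, hq⟩ := hz
    have hA1c : (p = m ∧ q = n) → m + n - p - q = 0 := by
      rintro ⟨h1, h2⟩; rw [h1, h2]; abel
    have hA2c : (p = n ∧ q = m) → m + n - p - q = 0 := by
      rintro ⟨h1, h2⟩; rw [h1, h2]; abel
    have hCc : (n = -m ∧ q = -p) → m + n - p - q = 0 := by
      rintro ⟨h1, h2⟩; rw [h1, h2]; abel
    have hgeo : m + n - p - q = 0 → (p = m ∧ q = n) ∨ (p = n ∧ q = m) ∨ (n = -m ∧ q = -p) := by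
      intro h
      exact circle_quad (hnorms m hm n hn) (hnorms m hm p hp) (hnorms m hm q hq)
        (sub_eq_zero.1 (by rw [← sub_sub]; exact h))
    have htriple : ¬((p = m ∧ q = n) ∧ (p = n ∧ q = m) ∧ (n = -m ∧ q = -p)) := by
      rintro ⟨⟨hpm, hqn⟩, ⟨hpn, hqm⟩, ⟨hnm, hqp⟩⟩
      have hmn : m = n := hpm.symm.trans hpn
      have h : m = -m := hmn.trans hnm
      have h1 : m.1 = 0 := by have := congrArg Prod.fst h; simp at this; omega
      have h2 : m.2 = 0 := by have := congrArg Prod.snd h; simp at this; omega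
      exact h0S ((Prod.ext_iff.2 ⟨by simpa using h1, by simpa using h2⟩ : m = 0) ▸ hm)
    by_cases h1 : p = m ∧ q = n <;> by_cases h2 : p = n ∧ q = m <;>
      by_cases h3 : n = -m ∧ q = -p
    · exact absurd ⟨h1, h2, h3⟩ htriple
    · rw [if_pos (hA1c h1), if_pos ⟨h1, h2⟩, if_neg (fun hh => h3 hh.2),
        if_neg (fun hh => h3 hh.2), if_pos h1, if_pos h2, if_neg h3]; ring
    · rw [if_pos (hA1c h1), if_neg (fun hh => h2 hh.2), if_pos ⟨h1, h3⟩,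
        if_neg (fun hh => h2 hh.1), if_pos h1, if_neg h2, if_pos h3]; ring
    · rw [if_pos (hA1c h1), if_neg (fun hh => h2 hh.2), if_neg (fun hh => h3 hh.2),
        if_neg (fun hh => h2 hh.1), if_pos h1, if_neg h2, if_neg h3]; ring
    · rw [if_pos (hA2c h2), if_neg (fun hh => h1 hh.1), if_neg (fun hh => h1 hh.1),
        if_pos ⟨h2, h3⟩, if_neg h1, if_pos h2, if_pos h3]; ring
    · rw [if_pos (hA2c h2), if_neg (fun hh => h1 hh.1), if_neg (fun hh => h1 hh.1),
        if_neg (fun hh => h3 hh.2), if_neg h1, if_pos h2, if_neg h3]; ring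
    · rw [if_pos (hCc h3), if_neg (fun hh => h1 hh.1), if_neg (fun hh => h1 hh.1),
        if_neg (fun hh => h2 hh.1), if_neg h1, if_neg h2, if_pos h3]; ring
    · have hc : ¬(m + n - p - q = 0) := fun h => by
        rcases hgeo h with h | h | h <;> tauto
      rw [if_neg hc, if_neg (fun hh => h1 hh.1), if_neg (fun hh => h1 hh.1),
        if_neg (fun hh => h2 hh.1), if_neg h1, if_neg h2, if_neg h3]; ring
  have hsum3 : (∑ z ∈ S ×ˢ S ×ˢ S ×ˢ S,
      ((if z.1 + z.2.1 - z.2.2.1 - z.2.2.2 = 0 then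
          a z.1 * a z.2.1 * (starRingEnd ℂ) (a z.2.2.1) * (starRingEnd ℂ) (a z.2.2.2) else 0)
        + (if (z.2.2.1 = z.1 ∧ z.2.2.2 = z.2.1) ∧ (z.2.2.1 = z.2.1 ∧ z.2.2.2 = z.1) then
          a z.1 * a z.2.1 * (starRingEnd ℂ) (a z.2.2.1) * (starRingEnd ℂ) (a z.2.2.2) else 0)
        + (if (z.2.2.1 = z.1 ∧ z.2.2.2 = z.2.1) ∧ (z.2.1 = -z.1 ∧ z.2.2.2 = -z.2.2.1) then
          a z.1 * a z.2.1 * (starRingEnd ℂ) (a z.2.2.1) * (starRingEnd ℂ) (a z.2.2.2) else 0)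
        + (if (z.2.2.1 = z.2.1 ∧ z.2.2.2 = z.1) ∧ (z.2.1 = -z.1 ∧ z.2.2.2 = -z.2.2.1) then
          a z.1 * a z.2.1 * (starRingEnd ℂ) (a z.2.2.1) * (starRingEnd ℂ) (a z.2.2.2) else 0)))
      = (∑ z ∈ S ×ˢ S ×ˢ S ×ˢ S,
      ((if z.2.2.1 = z.1 ∧ z.2.2.2 = z.2.1 then
          a z.1 * a z.2.1 * (starRingEnd ℂ) (a z.2.2.1) * (starRingEnd ℂ) (a z.2.2.2) else 0)
        + (if z.2.2.1 = z.2.1 ∧ z.2.2.2 = z.1 then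
          a z.1 * a z.2.1 * (starRingEnd ℂ) (a z.2.2.1) * (starRingEnd ℂ) (a z.2.2.2) else 0)
        + (if z.2.1 = -z.1 ∧ z.2.2.2 = -z.2.2.1 then
          a z.1 * a z.2.1 * (starRingEnd ℂ) (a z.2.2.1) * (starRingEnd ℂ) (a z.2.2.2) else 0))) :=
    Finset.sum_congr rfl hident
  simp only [Finset.sum_add_distrib] at hsum3
  have hre := congrArg Complex.re hsum3
  simp only [Complex.add_re] at hre
  -- nonnegativity of the three correction terms
  have hY12 : 0 ≤ (∑ z ∈ S ×ˢ S ×ˢ S ×ˢ S,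
      if (z.2.2.1 = z.1 ∧ z.2.2.2 = z.2.1) ∧ (z.2.2.1 = z.2.1 ∧ z.2.2.2 = z.1) then
        a z.1 * a z.2.1 * (starRingEnd ℂ) (a z.2.2.1) * (starRingEnd ℂ) (a z.2.2.2) else 0).re := by
    rw [Complex.re_sum]
    refine Finset.sum_nonneg fun z _ => ?_
    split_ifs with h
    · rw [h.1.1, h.1.2]; exact re_nonneg_pair _ _
    · simp
  have hY1C : 0 ≤ (∑ z ∈ S ×ˢ S ×ˢ S ×ˢ S,
      if (z.2.2.1 = z.1 ∧ z.2.2.2 = z.2.1) ∧ (z.2.1 = -z.1 ∧ z.2.2.2 = -z.2.2.1) then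
        a z.1 * a z.2.1 * (starRingEnd ℂ) (a z.2.2.1) * (starRingEnd ℂ) (a z.2.2.2) else 0).re := by
    rw [Complex.re_sum]
    refine Finset.sum_nonneg fun z _ => ?_
    split_ifs with h
    · rw [h.1.1, h.1.2]; exact re_nonneg_pair _ _
    · simp
  have hY2C : 0 ≤ (∑ z ∈ S ×ˢ S ×ˢ S ×ˢ S,
      if (z.2.2.1 = z.2.1 ∧ z.2.2.2 = z.1) ∧ (z.2.1 = -z.1 ∧ z.2.2.2 = -z.2.2.1) then
        a z.1 * a z.2.1 * (starRingEnd ℂ) (a z.2.2.1) * (starRingEnd ℂ) (a z.2.2.2) else 0).re := by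
    rw [Complex.re_sum]
    refine Finset.sum_nonneg fun z _ => ?_
    split_ifs with h
    · rw [h.1.1, h.1.2]
      rw [show a z.1 * a z.2.1 * (starRingEnd ℂ) (a z.2.1) * (starRingEnd ℂ) (a z.1) =
        a z.1 * a z.2.1 * (starRingEnd ℂ) (a z.1) * (starRingEnd ℂ) (a z.2.1) by ring]
      exact re_nonneg_pair _ _
    · simp
  -- evaluation of the two diagonal sums
  have hdiag : (∑ m ∈ S, a m * (starRingEnd ℂ) (a m)) = ((Q : ℝ) : ℂ) := by
    rw [show ((Q : ℝ) : ℂ) = ∑ m ∈ S, ((‖a m‖ ^ 2 : ℝ) : ℂ) by rw [hQ]; push_cast; rfl]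
    exact Finset.sum_congr rfl fun m _ => mul_conj_norm (a m)
  have hZ1 : (∑ z ∈ S ×ˢ S ×ˢ S ×ˢ S,
      if z.2.2.1 = z.1 ∧ z.2.2.2 = z.2.1 then
        a z.1 * a z.2.1 * (starRingEnd ℂ) (a z.2.2.1) * (starRingEnd ℂ) (a z.2.2.2) else 0)
      = ((Q : ℝ) : ℂ) ^ 2 := by
    simp only [Finset.sum_product]
    rw [show ((Q : ℝ) : ℂ) ^ 2 = (∑ m ∈ S, a m * (starRingEnd ℂ) (a m)) *
      (∑ n ∈ S, a n * (starRingEnd ℂ) (a n)) by rw [hdiag]; ring]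
    rw [Finset.sum_mul_sum]
    refine Finset.sum_congr rfl fun m hm => Finset.sum_congr rfl fun n hn => ?_
    simp only [ite_and, sum_ite_const, Finset.sum_ite_eq', hn, if_true, hm]
    ring
  have hZ2 : (∑ z ∈ S ×ˢ S ×ˢ S ×ˢ S,
      if z.2.2.1 = z.2.1 ∧ z.2.2.2 = z.1 then
        a z.1 * a z.2.1 * (starRingEnd ℂ) (a z.2.2.1) * (starRingEnd ℂ) (a z.2.2.2) else 0)
      = ((Q : ℝ) : ℂ) ^ 2 := by
    simp only [Finset.sum_product]
    rw [show ((Q : ℝ) : ℂ) ^ 2 = (∑ m ∈ S, a m * (starRingEnd ℂ) (a m)) *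
      (∑ n ∈ S, a n * (starRingEnd ℂ) (a n)) by rw [hdiag]; ring]
    rw [Finset.sum_mul_sum]
    refine Finset.sum_congr rfl fun m hm => Finset.sum_congr rfl fun n hn => ?_
    simp only [ite_and, sum_ite_const, Finset.sum_ite_eq', hn, if_true, hm]
    ring
  -- the zero-frequency sum
  have hZC : (∑ z ∈ S ×ˢ S ×ˢ S ×ˢ S,
      if z.2.1 = -z.1 ∧ z.2.2.2 = -z.2.2.1 then
        a z.1 * a z.2.1 * (starRingEnd ℂ) (a z.2.2.1) * (starRingEnd ℂ) (a z.2.2.2) else 0)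
      = (∑ m ∈ S, a m * a (-m)) * (starRingEnd ℂ) (∑ m ∈ S, a m * a (-m)) := by
    simp only [Finset.sum_product]
    rw [map_sum, Finset.sum_mul_sum]
    refine Finset.sum_congr rfl fun m hm => ?_
    rw [show (∑ p ∈ S, a m * a (-m) * (starRingEnd ℂ) (a p * a (-p))) =
      ∑ n ∈ S, if n = -m then
        (∑ p ∈ S, ∑ q ∈ S, if q = -p then
          a m * a n * (starRingEnd ℂ) (a p) * (starRingEnd ℂ) (a q) else 0) else 0 by
      rw [Finset.sum_ite_eq' S (-m), if_pos (hneg m hm)]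
      refine Finset.sum_congr rfl fun p hp => ?_
      rw [Finset.sum_ite_eq' S (-p), if_pos (hneg p hp), map_mul]
      ring]
    refine Finset.sum_congr rfl fun n hn => ?_
    simp only [ite_and, sum_ite_const]
  have hZCre : ((∑ m ∈ S, a m * a (-m)) * (starRingEnd ℂ) (∑ m ∈ S, a m * a (-m))).re ≤ Q ^ 2 := by
    rw [mul_conj_norm, Complex.ofReal_re]
    have h1 : ‖∑ m ∈ S, a m * a (-m)‖ ≤ ∑ m ∈ S, ‖a m‖ * ‖a (-m)‖ :=
      (norm_sum_le _ _).trans (le_of_eq (Finset.sum_congr rfl fun m _ => norm_mul _ _))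
    have h2 : (∑ m ∈ S, ‖a m‖ * ‖a (-m)‖) ^ 2 ≤
        (∑ m ∈ S, ‖a m‖ ^ 2) * (∑ m ∈ S, ‖a (-m)‖ ^ 2) :=
      Finset.sum_mul_sq_le_sq_mul_sq S _ _
    have h3 : (∑ m ∈ S, ‖a (-m)‖ ^ 2) = Q := by
      rw [hQ]
      exact Finset.sum_nbij' (fun m => -m) (fun m => -m)
        (fun m hm => hneg m hm) (fun m hm => hneg m hm)
        (fun m _ => by simp) (fun m _ => by simp)
        (fun m _ => by simp)
    have h4 : ‖∑ m ∈ S, a m * a (-m)‖ ^ 2 ≤ (∑ m ∈ S, ‖a m‖ * ‖a (-m)‖) ^ 2 :=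
      pow_le_pow_left₀ (norm_nonneg _) h1 2
    calc ‖∑ m ∈ S, a m * a (-m)‖ ^ 2 ≤ (∑ m ∈ S, ‖a m‖ * ‖a (-m)‖) ^ 2 := h4
      _ ≤ (∑ m ∈ S, ‖a m‖ ^ 2) * (∑ m ∈ S, ‖a (-m)‖ ^ 2) := h2
      _ = Q * Q := by rw [h3, ← hQ]
      _ = Q ^ 2 := by ring
  rw [hZ1, hZ2, hZC] at hre
  have hQ2 : (((Q : ℝ) : ℂ) ^ 2).re = Q ^ 2 := by
    rw [← Complex.ofReal_pow, Complex.ofReal_re]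
  rw [hQ2] at hre
  linarith [hre, hY12, hY1C, hY2C, hZCre]

end
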